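/- Under OCP with corrupted feedback (update r_{t+1} = r_t - η ḡ_t with ḡ_t ∈ {α, α-1}, true gradient g_t = α - 1{r_t < s_t}, s_t ∈ [0,B], r_1 = 0), the empirical miscoverage satisfies |α - (1/T) Σ_{t=1}^T 1{r_t < s_t}| ≤ (B + η)/(η T) + |G_{0→1} - G_{1→0}|/T + max{α G_{1→0}, (1-α) G_{0→1}}/T, where G_{0→1} (resp. G_{1→0}) counts rounds where the gradient is flipped from α to α-1 (resp. from α-1 to α). -/

import Mathlib

/-- Theorem 1: miscoverage of OCP under corrupted feedback. -/
theorem ocp_corrupted_miscoverage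
    (B η α : ℝ) (T : ℕ) (s r g gbar : ℕ → ℝ)
    (hB : 0 < B) (hη : 0 < η) (hα : α ∈ Set.Icc (0 : ℝ) 1) (hT : 1 ≤ T)
    (hs : ∀ t, s t ∈ Set.Icc (0 : ℝ) B)
    (hg : ∀ t, g t = α - (if r t < s t then (1 : ℝ) else 0))
    (hgbar : ∀ t, gbar t = α ∨ gbar t = α - 1)
    (hr1 : r 1 = 0)
    (hrec : ∀ t, 1 ≤ t → r (t + 1) = r t - η * gbar t) :
    |α - (1 / (T : ℝ)) * ∑ t ∈ Finset.Icc 1 T, (if r t < s t then (1 : ℝ) else 0)|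
      ≤ (B + η) / (η * T)
        + |(((Finset.Icc 1 T).filter (fun u => g u = α ∧ gbar u = α - 1)).card : ℝ)
            - (((Finset.Icc 1 T).filter (fun u => g u = α - 1 ∧ gbar u = α)).card : ℝ)|
            / T
        + max (α * (((Finset.Icc 1 T).filter
              (fun u => g u = α - 1 ∧ gbar u = α)).card : ℝ))
            ((1 - α) * (((Finset.Icc 1 T).filter
              (fun u => g u = α ∧ gbar u = α - 1)).card : ℝ)) / T := by
  classical
  obtain ⟨hα0, hα1⟩ := hα
  have hα1' : α ≠ α - 1 := by intro h; linarith
  have hα1'' : α - 1 ≠ α := by intro h; linarith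
  set C01 : ℕ → ℝ := fun n => ∑ t ∈ Finset.Icc 1 n,
    (if g t = α ∧ gbar t = α - 1 then (1:ℝ) else 0) with hC01
  set C10 : ℕ → ℝ := fun n => ∑ t ∈ Finset.Icc 1 n,
    (if g t = α - 1 ∧ gbar t = α then (1:ℝ) else 0) with hC10
  have hC01nn : ∀ n, 0 ≤ C01 n := fun n =>
    Finset.sum_nonneg (fun t _ => by positivity)
  have hC10nn : ∀ n, 0 ≤ C10 n := fun n =>
    Finset.sum_nonneg (fun t _ => by positivity)
  have hC01step : ∀ n, C01 (n+1) = C01 n +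
      (if g (n+1) = α ∧ gbar (n+1) = α - 1 then (1:ℝ) else 0) := by
    intro n
    simp only [hC01]
    exact Finset.sum_Icc_succ_top (Nat.le_add_left 1 n) _
  have hC10step : ∀ n, C10 (n+1) = C10 n +
      (if g (n+1) = α - 1 ∧ gbar (n+1) = α then (1:ℝ) else 0) := by
    intro n
    simp only [hC10]
    exact Finset.sum_Icc_succ_top (Nat.le_add_left 1 n) _
  -- telescoping
  have hrsum : ∀ n, r (n+1) = -η * ∑ t ∈ Finset.Icc 1 n, gbar t := by
    intro n
    induction n with
    | zero => simpa using hr1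
    | succ n ih =>
      rw [hrec (n+1) (Nat.le_add_left 1 n),
        Finset.sum_Icc_succ_top (Nat.le_add_left 1 n), ih]
      ring
  -- upper bound on r
  have hub : ∀ n, r (n+1) ≤ B + η * (1-α) * (1 + C01 n) := by
    intro n
    induction n with
    | zero =>
      simp only [hC01, Finset.Icc_self, Finset.Icc_eq_empty_of_lt Nat.zero_lt_one,
        Finset.sum_empty, hr1]
      nlinarith
    | succ n ih =>
      rw [hrec (n+1) (Nat.le_add_left 1 n), hC01step n]
      have hnn1 : (0:ℝ) ≤ η * (1 - α) := by nlinarith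
      have hcn := hC01nn n
      rcases hgbar (n+1) with h1 | h1
      · have hif : (if g (n+1) = α ∧ gbar (n+1) = α - 1 then (1:ℝ) else 0) = 0 := by
          rw [if_neg]; rintro ⟨-, h2⟩; exact hα1' (h1 ▸ h2)
        rw [hif, h1]
        linarith [mul_nonneg hη.le hα0]
      · by_cases h2 : r (n+1) < s (n+1)
        · have hsb := (hs (n+1)).2
          have hif : (0:ℝ) ≤ (if g (n+1) = α ∧ gbar (n+1) = α - 1 then (1:ℝ) else 0) := by
            positivity
          have key : η * gbar (n+1) = η * (α - 1) := by rw [h1]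
          linarith [mul_nonneg hnn1 hcn, mul_nonneg hnn1 hif]
        · have h3 : g (n+1) = α := by rw [hg (n+1), if_neg h2]; ring
          rw [if_pos ⟨h3, h1⟩, h1]
          linarith
  -- lower bound on r
  have hlb : ∀ n, -(η * α * (1 + C10 n)) ≤ r (n+1) := by
    intro n
    induction n with
    | zero =>
      simp only [hC10, Finset.Icc_eq_empty_of_lt Nat.zero_lt_one,
        Finset.sum_empty, hr1]
      nlinarith
    | succ n ih =>
      rw [hrec (n+1) (Nat.le_add_left 1 n), hC10step n]
      have hnn1 : (0:ℝ) ≤ η * α := by nlinarith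
      have hcn := hC10nn n
      rcases hgbar (n+1) with h1 | h1
      · by_cases h2 : r (n+1) < s (n+1)
        · have h3 : g (n+1) = α - 1 := by rw [hg (n+1), if_pos h2]
          rw [if_pos ⟨h3, h1⟩, h1]
          linarith
        · have hsb := (hs (n+1)).1
          have hr' : s (n+1) ≤ r (n+1) := not_lt.mp h2
          have hif : (0:ℝ) ≤ (if g (n+1) = α - 1 ∧ gbar (n+1) = α then (1:ℝ) else 0) := by
            positivity
          have key : η * gbar (n+1) = η * α := by rw [h1]
          linarith [mul_nonneg hnn1 hcn, mul_nonneg hnn1 hif]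
      · have hif : (if g (n+1) = α - 1 ∧ gbar (n+1) = α then (1:ℝ) else 0) = 0 := by
          rw [if_neg]; rintro ⟨-, h2⟩; exact hα1'' (h1 ▸ h2)
        rw [hif, h1]
        linarith [mul_nonneg hη.le (show (0:ℝ) ≤ 1 - α by linarith)]
  -- pointwise gradient difference
  have hdiff : ∀ t, gbar t = g t + ((if g t = α - 1 ∧ gbar t = α then (1:ℝ) else 0)
      - (if g t = α ∧ gbar t = α - 1 then (1:ℝ) else 0)) := by
    intro t
    rcases hgbar t with h1 | h1 <;> by_cases h2 : r t < s t <;>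
      simp [hg t, h1, h2, hα1', hα1''] <;> ring
  -- sum identities
  have hSgbar : ∑ t ∈ Finset.Icc 1 T, gbar t
      = (∑ t ∈ Finset.Icc 1 T, g t) + (C10 T - C01 T) := by
    rw [hC10, hC01, Finset.sum_congr rfl (fun t _ => hdiff t),
      Finset.sum_add_distrib, Finset.sum_sub_distrib]
  have hSg : ∑ t ∈ Finset.Icc 1 T, g t
      = (T:ℝ) * α - ∑ t ∈ Finset.Icc 1 T, (if r t < s t then (1:ℝ) else 0) := by
    rw [Finset.sum_congr rfl (fun t _ => hg t), Finset.sum_sub_distrib,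
      Finset.sum_const, Nat.card_Icc]
    simp [mul_comm]
  have hTpos : (0:ℝ) < T := by exact_mod_cast Nat.lt_of_lt_of_le Nat.zero_lt_one hT
  -- cast cards to indicator sums
  have e01 : (((Finset.Icc 1 T).filter (fun u => g u = α ∧ gbar u = α - 1)).card : ℝ)
      = C01 T := by
    simp only [hC01]
    rw [Finset.sum_boole]
  have e10 : (((Finset.Icc 1 T).filter (fun u => g u = α - 1 ∧ gbar u = α)).card : ℝ)
      = C10 T := by
    simp only [hC10]
    rw [Finset.sum_boole]
  rw [e01, e10]
  -- main identity
  set Sind := ∑ t ∈ Finset.Icc 1 T, (if r t < s t then (1:ℝ) else 0) with hSind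
  set M := max (α * C10 T) ((1-α) * C01 T) with hM
  have hMnn : 0 ≤ M := le_trans (by positivity : (0:ℝ) ≤ α * C10 T) (le_max_left _ _)
  have hkey : α - (1 / (T:ℝ)) * Sind
      = (1 / (T:ℝ)) * (-(r (T+1)) / η + (C01 T - C10 T)) := by
    have h1 := hrsum T
    have h2 : -(r (T+1)) / η = ∑ t ∈ Finset.Icc 1 T, gbar t := by
      rw [h1]; field_simp
    rw [h2, hSgbar, hSg]
    field_simp
    ring
  have hRb : |r (T+1)| ≤ B + η + η * M := by
    rw [abs_le]
    constructor
    · have h0 := hlb T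
      have h1 : η * (α * C10 T) ≤ η * M :=
        mul_le_mul_of_nonneg_left (le_max_left _ _) hη.le
      have h2 : (0:ℝ) ≤ η * (1 - α) := mul_nonneg hη.le (by linarith)
      linarith
    · have h0 := hub T
      have h1 : η * ((1-α) * C01 T) ≤ η * M :=
        mul_le_mul_of_nonneg_left (le_max_right _ _) hη.le
      have h2 : (0:ℝ) ≤ η * α := mul_nonneg hη.le hα0
      linarith
  have habs : |α - (1 / (T:ℝ)) * Sind|
      ≤ (1 / (T:ℝ)) * (|r (T+1)| / η + |C01 T - C10 T|) := by
    rw [hkey, abs_mul, abs_of_pos (by positivity : (0:ℝ) < 1 / (T:ℝ))]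
    apply mul_le_mul_of_nonneg_left _ (by positivity)
    calc |-(r (T+1)) / η + (C01 T - C10 T)|
        ≤ |-(r (T+1)) / η| + |C01 T - C10 T| := abs_add_le _ _
      _ = |r (T+1)| / η + |C01 T - C10 T| := by
          rw [abs_div, abs_neg, abs_of_pos hη]
  refine habs.trans ?_
  have h2 : |r (T+1)| / η ≤ (B + η) / η + M := by
    rw [div_le_iff₀ hη]
    have : ((B + η) / η + M) * η = B + η + η * M := by field_simp
    rw [this]
    exact hRb
  have h3 : (1 / (T:ℝ)) * (|r (T+1)| / η + |C01 T - C10 T|)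
      ≤ (1 / (T:ℝ)) * ((B + η) / η + M + |C01 T - C10 T|) := by
    apply mul_le_mul_of_nonneg_left _ (by positivity)
    linarith
  refine h3.trans (le_of_eq ?_)
  field_simp
  ring
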